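/- Let σ, τ : [m] → [m] be two permutations (rankings of m items). Then Σ_{i=1}^m |σ(i) − τ(i)| ≤ 2·|{ (i,j) : 1 ≤ i < j ≤ m, (σ(i) − σ(j))·(τ(i) − τ(j)) < 0 }|; that is, Spearman's footrule is at most twice Kendall's tau distance. -/
import Mathlib

open Finset

lemma cardlt {m : ℕ} (π : Equiv.Perm (Fin m)) (i : Fin m) :
    (univ.filter fun j => π j < π i).card = (π i : ℕ) := by
  have h : (univ.filter fun j => π j < π i) = (Finset.Iio (π i)).image π.symm := by
    ext j
    simp only [Finset.mem_filter, Finset.mem_univ, true_and, Finset.mem_image,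
      Finset.mem_Iio]
    constructor
    · intro h; exact ⟨π j, h, by simp⟩
    · rintro ⟨a, ha, rfl⟩; simpa using ha
  rw [h, Finset.card_image_of_injective _ π.symm.injective, Fin.card_Iio]

lemma half {m : ℕ} (σ τ : Equiv.Perm (Fin m)) (i : Fin m) :
    ((σ i : ℤ) - (τ i : ℤ)) ≤
      ((univ.filter fun j => ((σ i : ℤ) - σ j) * ((τ i : ℤ) - τ j) < 0).card : ℤ) := by
  set F := univ.filter fun j => ((σ i : ℤ) - σ j) * ((τ i : ℤ) - τ j) < 0 with hF
  set S := univ.filter fun j => σ j < σ i with hS'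
  set T := univ.filter fun j => τ j < τ i with hT'
  have hS : S.card = (σ i : ℕ) := cardlt σ i
  have hT : T.card = (τ i : ℕ) := cardlt τ i
  have hsub : S \ T ⊆ F := by
    intro j hj
    simp only [hS', hT', Finset.mem_sdiff, Finset.mem_filter, Finset.mem_univ, true_and,
      not_lt] at hj
    obtain ⟨h1, h2⟩ := hj
    have hne : j ≠ i := by rintro rfl; exact absurd h1 (lt_irrefl _)
    have h2' : τ i < τ j := lt_of_le_of_ne h2 (fun h => hne (τ.injective h.symm))
    simp only [hF, Finset.mem_filter, Finset.mem_univ, true_and]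
    have a1 : (0:ℤ) < (σ i : ℤ) - σ j := by
      have := Fin.lt_iff_val_lt_val.mp h1; omega
    have a2 : ((τ i : ℤ) - τ j) < 0 := by
      have := Fin.lt_iff_val_lt_val.mp h2'; omega
    exact mul_neg_of_pos_of_neg a1 a2
  have hc : (σ i : ℕ) ≤ (S \ T).card + (τ i : ℕ) := by
    rw [← hS, ← hT]
    calc S.card ≤ (S ∪ T).card := Finset.card_le_card Finset.subset_union_left
    _ ≤ (S \ T).card + T.card := by rw [← Finset.card_sdiff_add_card]
  have hle : (S \ T).card ≤ F.card := Finset.card_le_card hsub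
  omega

/-- Diaconis–Graham: Spearman's footrule is at most twice Kendall's tau distance. -/
theorem stmt13 (m : ℕ) (σ τ : Equiv.Perm (Fin m)) :
    ∑ i, |((σ i : ℤ) - (τ i : ℤ))|
      ≤ 2 * ((Finset.univ.filter
          (fun p : Fin m × Fin m => p.1 < p.2 ∧
            ((σ p.1 : ℤ) - (σ p.2 : ℤ)) * ((τ p.1 : ℤ) - (τ p.2 : ℤ)) < 0)).card : ℤ) := by
  set D := fun i : Fin m => univ.filter fun j => ((σ i : ℤ) - σ j) * ((τ i : ℤ) - τ j) < 0
    with hD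
  have step1 : ∑ i, |((σ i : ℤ) - (τ i : ℤ))| ≤ ∑ i, ((D i).card : ℤ) := by
    apply Finset.sum_le_sum
    intro i _
    rcases abs_cases ((σ i : ℤ) - τ i) with ⟨h, _⟩ | ⟨h, _⟩
    · rw [h]; exact half σ τ i
    · rw [h]
      have hset : (univ.filter fun j => ((τ i : ℤ) - τ j) * ((σ i : ℤ) - σ j) < 0) = D i := by
        simp [hD, mul_comm]
      calc -(((σ i : ℤ)) - τ i) = (τ i : ℤ) - σ i := by ring
      _ ≤ _ := by rw [← hset]; exact half τ σ i
  set P := univ.filter fun p : Fin m × Fin m =>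
    ((σ p.1 : ℤ) - σ p.2) * ((τ p.1 : ℤ) - τ p.2) < 0 with hP
  have step2 : ∑ i, (D i).card = P.card := by
    rw [Finset.card_filter, ← Finset.univ_product_univ, Finset.sum_product]
    apply Finset.sum_congr rfl
    intro i _
    rw [Finset.card_filter]
  set K := Finset.univ.filter
      (fun p : Fin m × Fin m => p.1 < p.2 ∧
        ((σ p.1 : ℤ) - (σ p.2 : ℤ)) * ((τ p.1 : ℤ) - (τ p.2 : ℤ)) < 0) with hK
  have step3 : P.card = 2 * K.card := by
    have hsplit : (P.filter fun p => p.1 < p.2).card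
        + (P.filter fun p => ¬ p.1 < p.2).card = P.card :=
      Finset.card_filter_add_card_filter_not _
    have h1 : P.filter (fun p => p.1 < p.2) = K := by
      simp only [hP, hK, Finset.filter_filter]
      apply Finset.filter_congr; intro p _; tauto
    have h2 : (P.filter fun p => ¬ p.1 < p.2).card = K.card := by
      apply Finset.card_bij (fun p _ => p.swap)
      · intro p hp
        simp only [hP, Finset.mem_filter, Finset.mem_univ, true_and, not_lt] at hp
        obtain ⟨hlt, hle⟩ := hp
        have hne : p.2 ≠ p.1 := by
          rintro h
          rw [h] at hlt; simp at hlt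
        simp only [hK, Finset.mem_filter, Finset.mem_univ, true_and, Prod.fst_swap,
          Prod.snd_swap]
        exact ⟨lt_of_le_of_ne hle hne, by nlinarith⟩
      · intro a ha b hb h
        exact Prod.swap_injective h
      · intro b hb
        refine ⟨b.swap, ?_, by simp⟩
        simp only [hK, Finset.mem_filter, Finset.mem_univ, true_and] at hb
        simp only [hP, Finset.mem_filter, Finset.mem_univ, true_and, Prod.fst_swap,
          Prod.snd_swap, not_lt]
        exact ⟨by nlinarith [hb.2], le_of_lt hb.1⟩
    rw [h1, h2] at hsplit
    omega
  calc ∑ i, |((σ i : ℤ) - (τ i : ℤ))| ≤ ∑ i, ((D i).card : ℤ) := step1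
  _ = ((∑ i, (D i).card : ℕ) : ℤ) := by push_cast; ring
  _ = 2 * (K.card : ℤ) := by rw [step2, step3]; push_cast; ring
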